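/- arXiv:2502.08360 — 2 statements merged into one kernel-verified Lean document; each statement's English description precedes it below -/
import Mathlib

section
/- For Q ∈ ℕ⁺ and 1 ≤ q ≤ Q, the function ρ ↦ (ρ^(q/(Q+1)) - 1)/(ρ - 1) is strictly decreasing on (1, ∞). -/
theorem threshold_strictAnti (Q : ℕ) (hQ : 0 < Q) (q : ℕ) (hq1 : 1 ≤ q) (hqQ : q ≤ Q) :
    StrictAntiOn (fun ρ : ℝ => (ρ ^ ((q : ℝ) / (Q + 1)) - 1) / (ρ - 1)) (Set.Ioi 1) := by
  intro x hx y hy hxy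
  simp only [Set.mem_Ioi] at hx hy
  have hp₀ : (0:ℝ) < (q : ℝ) / (Q + 1) := by positivity
  have hp₁ : (q : ℝ) / (Q + 1) < 1 := by
    rw [div_lt_one (by positivity)]
    have : (q:ℝ) ≤ (Q:ℝ) := by exact_mod_cast hqQ
    linarith
  have hf := Real.strictConcaveOn_rpow hp₀ hp₁
  have key := hf.secant_strict_mono (a := 1) (x := x) (y := y)
    (by norm_num) (le_of_lt (by linarith) : (0:ℝ) ≤ x) (le_of_lt (by linarith) : (0:ℝ) ≤ y)
    (ne_of_gt hx) (ne_of_gt hy) hxy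
  simpa [Real.one_rpow] using key
end

section
/- For 1 < ρ₁ < ρ₂, the companders satisfy h_{ρ₂}(z) ≥ h_{ρ₁}(z) for all z ∈ [0,1], where h_ρ(z) = log_ρ((ρ-1)z + 1). -/
theorem compander_monotone_in_rho (ρ₁ ρ₂ : ℝ) (h₁ : 1 < ρ₁) (h₁₂ : ρ₁ < ρ₂) :
    ∀ z ∈ Set.Icc (0:ℝ) 1,
      Real.log ((ρ₁ - 1) * z + 1) / Real.log ρ₁ ≤
        Real.log ((ρ₂ - 1) * z + 1) / Real.log ρ₂ := by
  intro z hz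
  obtain ⟨hz0, hz1⟩ := hz
  have h₂ : (1:ℝ) < ρ₂ := h₁.trans h₁₂
  have hl₁ : 0 < Real.log ρ₁ := Real.log_pos h₁
  have hl₂ : 0 < Real.log ρ₂ := Real.log_pos h₂
  set a : ℝ := (ρ₁ - 1) * z + 1 with ha_def
  have ha1 : 1 ≤ a := by nlinarith
  have haρ : a ≤ ρ₁ := by nlinarith
  set u : ℝ := Real.log a / Real.log ρ₁ with hu_def
  have hu0 : 0 ≤ u := div_nonneg (Real.log_nonneg ha1) hl₁.le
  have hu1 : u ≤ 1 := by
    rw [div_le_one hl₁]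
    exact Real.log_le_log (by linarith) haρ
  have hρ₁u : ρ₁ ^ u = a := by
    rw [Real.rpow_def_of_pos (by linarith : (0:ℝ) < ρ₁)]
    have h : Real.log ρ₁ * u = Real.log a := by
      rw [hu_def]; field_simp
    rw [h, Real.exp_log (by linarith)]
  -- key concavity inequality: (ρ₂^u - 1)/(ρ₂-1) ≤ (ρ₁^u - 1)/(ρ₁-1)
  have hconc := (Real.concaveOn_rpow hu0 hu1).neg
  have key := hconc.secant_mono (a := 1) (x := ρ₁) (y := ρ₂)
    (by norm_num) (Set.mem_Ici.2 (by linarith)) (Set.mem_Ici.2 (by linarith))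
    (by linarith) (by linarith) h₁₂.le
  simp only [Pi.neg_apply, Real.one_rpow] at key
  have key' : (ρ₂ ^ u - 1) / (ρ₂ - 1) ≤ (ρ₁ ^ u - 1) / (ρ₁ - 1) := by
    have h1 : (-ρ₁ ^ u - -1) / (ρ₁ - 1) = -((ρ₁ ^ u - 1) / (ρ₁ - 1)) := by ring
    have h2 : (-ρ₂ ^ u - -1) / (ρ₂ - 1) = -((ρ₂ ^ u - 1) / (ρ₂ - 1)) := by ring
    rw [h1, h2] at key
    linarith
  have hz_eq : z = (ρ₁ ^ u - 1) / (ρ₁ - 1) := by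
    have h : a - 1 = (ρ₁ - 1) * z := by rw [ha_def]; ring
    rw [hρ₁u, h, mul_comm, mul_div_assoc, div_self (by linarith : ρ₁ - 1 ≠ 0), mul_one]
  have hρ₂u : ρ₂ ^ u ≤ (ρ₂ - 1) * z + 1 := by
    rw [hz_eq]
    have := mul_le_mul_of_nonneg_left key' (by linarith : (0:ℝ) ≤ ρ₂ - 1)
    calc ρ₂ ^ u = (ρ₂ - 1) * ((ρ₂ ^ u - 1) / (ρ₂ - 1)) + 1 := by
          rw [mul_comm, div_mul_cancel₀ _ (by linarith : ρ₂ - 1 ≠ 0)]; ring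
      _ ≤ (ρ₂ - 1) * ((ρ₁ ^ u - 1) / (ρ₁ - 1)) + 1 := by linarith
  have hlog : u * Real.log ρ₂ ≤ Real.log ((ρ₂ - 1) * z + 1) := by
    have := Real.log_le_log (Real.rpow_pos_of_pos (by linarith) u) hρ₂u
    rwa [Real.log_rpow (by linarith)] at this
  rw [hu_def] at hlog
  rw [div_le_div_iff₀ hl₁ hl₂]
  calc Real.log a * Real.log ρ₂ = Real.log a / Real.log ρ₁ * Real.log ρ₂ * Real.log ρ₁ := by
        field_simp
    _ ≤ Real.log ((ρ₂ - 1) * z + 1) * Real.log ρ₁ :=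
        mul_le_mul_of_nonneg_right hlog hl₁.le
end
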